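/- Information-projection identity: Let μ be a joint distribution of discrete (X,Y), η : 𝒳 → 𝒰, U = η(X), and let 𝒫_η be the set of joint distributions μ̃ on 𝒳 × 𝒴 under which X and Y are conditionally independent given η(X). Then min over μ̃ ∈ 𝒫_η of D(μ ‖ μ̃) equals I(X;Y|U), and the minimum is attained by μ̃*(x,y) = μ_X(x) · μ_{Y|U}(y|η(x)). -/

import Mathlib

open Finset

noncomputable section

/-- Marginal distribution of the first coordinate of a joint distribution. -/
def margX {X Y : Type*} [Fintype Y] (μ : X → Y → ℝ) (x : X) : ℝ := ∑ y, μ x y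

/-- Marginal distribution of the second coordinate. -/
def margY {X Y : Type*} [Fintype X] (μ : X → Y → ℝ) (y : Y) : ℝ := ∑ x, μ x y

/-- Distribution of `U = η X`. -/
def margU {X Y U : Type*} [Fintype X] [Fintype Y] [DecidableEq U]
    (μ : X → Y → ℝ) (η : X → U) (u : U) : ℝ :=
  ∑ x, if η x = u then margX μ x else 0

/-- Joint probability `P(Y = y, η X = u)`. -/
def margYU {X Y U : Type*} [Fintype X] [DecidableEq U]
    (μ : X → Y → ℝ) (η : X → U) (y : Y) (u : U) : ℝ :=
  ∑ x, if η x = u then μ x y else 0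

/-- Joint distribution of the pair `(η X, Y)`. -/
def jointUY {X Y U : Type*} [Fintype X] [DecidableEq U]
    (μ : X → Y → ℝ) (η : X → U) : U → Y → ℝ :=
  fun u y => margYU μ η y u

/-- Shannon mutual information `I(X;Y)` of a joint distribution (natural log). -/
def MI {X Y : Type*} [Fintype X] [Fintype Y] (μ : X → Y → ℝ) : ℝ :=
  ∑ x, ∑ y, μ x y * Real.log (μ x y / (margX μ x * margY μ y))

/-- Conditional Shannon entropy `H(Y|X)`. -/
def condEnt {X Y : Type*} [Fintype X] [Fintype Y] (μ : X → Y → ℝ) : ℝ :=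
  -∑ x, ∑ y, μ x y * Real.log (μ x y / margX μ x)

/-- Conditional mutual information `I(X;Y|U)` where `U = η X` is a deterministic
function of `X`. -/
def condMI {X Y U : Type*} [Fintype X] [Fintype Y] [DecidableEq U]
    (μ : X → Y → ℝ) (η : X → U) : ℝ :=
  ∑ x, ∑ y, μ x y *
    Real.log (μ x y * margU μ η (η x) / (margX μ x * margYU μ η y (η x)))

/-- `μ` is a probability distribution on `X × Y`. -/
def IsDist {X Y : Type*} [Fintype X] [Fintype Y] (μ : X → Y → ℝ) : Prop :=
  (∀ x y, 0 ≤ μ x y) ∧ ∑ x, ∑ y, μ x y = 1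

/-- `X` and `Y` are conditionally independent given `U = η X`: for every `u` with
`P(U = u) > 0`, `P(X = x, Y = y | U = u) = P(X = x | U = u) · P(Y = y | U = u)`
(stated multiplied through by `P(U = u)²`). -/
def CondIndep {X Y U : Type*} [Fintype X] [Fintype Y] [DecidableEq U]
    (μ : X → Y → ℝ) (η : X → U) : Prop :=
  ∀ u, 0 < margU μ η u → ∀ x y,
    (if η x = u then μ x y else 0) * margU μ η u =
      (if η x = u then margX μ x else 0) * margYU μ η y u

/-- Cross-entropy risk `E_{(X,Y)∼μ}[− log v(Y|X)]` of a predictive conditional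
distribution `v`. -/
def risk {X Y : Type*} [Fintype X] [Fintype Y] (μ : X → Y → ℝ) (v : X → Y → ℝ) : ℝ :=
  ∑ x, ∑ y, μ x y * (-Real.log (v x y))

/-- Kullback–Leibler divergence between two joint distributions on `X × Y`. -/
def KL {X Y : Type*} [Fintype X] [Fintype Y] (μ ν : X → Y → ℝ) : ℝ :=
  ∑ x, ∑ y, μ x y * Real.log (μ x y / ν x y)

/-- Averaged conditional KL divergence `D(μ_{Y|X} ‖ v | μ_X)`. -/
def avgKL {X Y : Type*} [Fintype X] [Fintype Y] (μ : X → Y → ℝ) (v : X → Y → ℝ) : ℝ :=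
  ∑ x, margX μ x * ∑ y,
    (μ x y / margX μ x) * Real.log ((μ x y / margX μ x) / v x y)

/-- Averaged conditional KL divergence in the latent domain:
`D(μ_{Y|U} ‖ v | μ_U)` for the encoder `η`. -/
def decKL {X Y U : Type*} [Fintype X] [Fintype Y] [Fintype U] [DecidableEq U]
    (μ : X → Y → ℝ) (η : X → U) (v : U → Y → ℝ) : ℝ :=
  ∑ u, margU μ η u * ∑ y,
    (margYU μ η y u / margU μ η u) *
      Real.log ((margYU μ η y u / margU μ η u) / v u y)

section Helpers
variable {X Y U : Type*} [Fintype X] [Fintype Y] [DecidableEq U]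
  (μ : X → Y → ℝ) (η : X → U)

lemma ite_nonneg' {c : Prop} [Decidable c] {a : ℝ} (h : 0 ≤ a) :
    0 ≤ if c then a else 0 := by split <;> simp [h]

lemma gibbs {ι : Type*} [Fintype ι] (p q : ι → ℝ) (hp : ∀ i, 0 ≤ p i)
    (hq : ∀ i, 0 ≤ q i) (hpq : ∀ i, p i ≠ 0 → 0 < q i)
    (hsum : ∑ i, q i ≤ ∑ i, p i) :
    0 ≤ ∑ i, p i * Real.log (p i / q i) := by
  have key : ∀ i, p i - q i ≤ p i * Real.log (p i / q i) := by
    intro i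
    rcases eq_or_lt_of_le (hp i) with h | h
    · simp [← h]; exact hq i
    · have hqi : 0 < q i := hpq i h.ne'
      have hlog : Real.log (q i / p i) ≤ q i / p i - 1 :=
        Real.log_le_sub_one_of_pos (div_pos hqi h)
      have hh : Real.log (p i / q i) = -Real.log (q i / p i) := by
        rw [← Real.log_inv]; congr 1; field_simp
      rw [hh]
      have h2 : p i * (1 - q i / p i) = p i - q i := by field_simp
      nlinarith [mul_le_mul_of_nonneg_left hlog (le_of_lt h)]
  calc (0:ℝ) = ∑ i, p i - ∑ i, q i + (∑ i, q i - ∑ i, p i) := by ring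
    _ ≤ ∑ i, p i - ∑ i, q i := by linarith
    _ = ∑ i, (p i - q i) := by rw [Finset.sum_sub_distrib]
    _ ≤ _ := Finset.sum_le_sum fun i _ => key i

lemma exists_pos_of_sum_pos {ι : Type*} [Fintype ι] (f : ι → ℝ)
    (hf : ∀ i, 0 ≤ f i) (h : 0 < ∑ i, f i) : ∃ i, 0 < f i := by
  by_contra hc
  push_neg at hc
  have h2 : ∑ i, f i ≤ 0 := Finset.sum_nonpos fun i _ => hc i
  linarith

variable (hμ : ∀ x y, 0 ≤ μ x y)

include hμ

lemma margX_nonneg (x : X) : 0 ≤ margX μ x := Finset.sum_nonneg fun y _ => hμ x y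

lemma le_margX (x : X) (y : Y) : μ x y ≤ margX μ x :=
  Finset.single_le_sum (fun y _ => hμ x y) (Finset.mem_univ y)

lemma margU_nonneg (u : U) : 0 ≤ margU μ η u :=
  Finset.sum_nonneg fun x _ => ite_nonneg' (margX_nonneg μ hμ x)

lemma margX_le_margU (x : X) : margX μ x ≤ margU μ η (η x) := by
  have := Finset.single_le_sum (s := Finset.univ)
    (f := fun x' => if η x' = η x then margX μ x' else 0)
    (fun x' _ => ite_nonneg' (margX_nonneg μ hμ x')) (Finset.mem_univ x)
  unfold margU
  simpa using this

lemma margYU_nonneg (y : Y) (u : U) : 0 ≤ margYU μ η y u :=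
  Finset.sum_nonneg fun x _ => ite_nonneg' (hμ x y)

lemma le_margYU (x : X) (y : Y) : μ x y ≤ margYU μ η y (η x) := by
  have := Finset.single_le_sum (s := Finset.univ)
    (f := fun x' => if η x' = η x then μ x' y else 0)
    (fun x' _ => ite_nonneg' (hμ x' y)) (Finset.mem_univ x)
  unfold margYU
  simpa using this

omit hμ in
lemma sum_margYU (u : U) : ∑ y, margYU μ η y u = margU μ η u := by
  unfold margYU margU margX
  rw [Finset.sum_comm]
  exact Finset.sum_congr rfl fun x _ => by split <;> simp

lemma margYU_le_margU (y : Y) (u : U) : margYU μ η y u ≤ margU μ η u := by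
  rw [← sum_margYU μ η]
  exact Finset.single_le_sum (fun y' _ => margYU_nonneg μ η hμ y' u) (Finset.mem_univ y)

lemma margX_eq_zero (x : X) (h : margU μ η (η x) = 0) : margX μ x = 0 :=
  le_antisymm (h ▸ margX_le_margU μ η hμ x) (margX_nonneg μ hμ x)

lemma margX_pos (x : X) (y : Y) (h : 0 < μ x y) : 0 < margX μ x :=
  lt_of_lt_of_le h (le_margX μ hμ x y)

lemma margU_pos (x : X) (y : Y) (h : 0 < μ x y) : 0 < margU μ η (η x) :=
  lt_of_lt_of_le (margX_pos μ hμ x y h) (margX_le_margU μ η hμ x)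

lemma margYU_pos (x : X) (y : Y) (h : 0 < μ x y) : 0 < margYU μ η y (η x) :=
  lt_of_lt_of_le h (le_margYU μ η hμ x y)

lemma margYU_pos_elim (y : Y) (u : U) (h : 0 < margYU μ η y u) :
    ∃ x, η x = u ∧ 0 < μ x y := by
  obtain ⟨x, hx⟩ := exists_pos_of_sum_pos _ (fun x => ite_nonneg' (hμ x y)) h
  have hxu : η x = u := by by_contra hc; simp [hc] at hx
  exact ⟨x, hxu, by simpa [hxu] using hx⟩

lemma margU_pos_elim (u : U) (h : 0 < margU μ η u) :
    ∃ x y, η x = u ∧ 0 < μ x y := by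
  obtain ⟨x, hx⟩ := exists_pos_of_sum_pos _
    (fun x => ite_nonneg' (margX_nonneg μ hμ x)) h
  have hxu : η x = u := by by_contra hc; simp [hc] at hx
  obtain ⟨y, hy⟩ := exists_pos_of_sum_pos _ (fun y => hμ x y) (by simpa [hxu, margX] using hx)
  exact ⟨x, y, hxu, hy⟩

end Helpers

/-- information-projection identity. The minimum of `D(μ‖μ̃)` over
distributions `μ̃` under which `X ⟂ Y | η(X)` equals `I(X;Y|U)`, attained at
`μ̃*(x,y) = μ_X(x) · μ_{Y|U}(y|η(x))`. -/
theorem stmt8 {X Y U : Type*} [Fintype X] [Fintype Y] [Fintype U] [DecidableEq U]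
    (μ : X → Y → ℝ) (η : X → U) (hμ : IsDist μ) :
    let μstar : X → Y → ℝ :=
      fun x y => margX μ x * (margYU μ η y (η x) / margU μ η (η x))
    IsDist μstar ∧ CondIndep μstar η ∧ KL μ μstar = condMI μ η ∧
      ∀ ν : X → Y → ℝ, IsDist ν → CondIndep ν η →
        (∀ x y, ν x y = 0 → μ x y = 0) → condMI μ η ≤ KL μ ν := by
  intro μstar
  obtain ⟨hμ0, hμ1⟩ := hμ
  have hμstar_def : ∀ x y, μstar x y
      = margX μ x * (margYU μ η y (η x) / margU μ η (η x)) := fun _ _ => rfl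
  have hsum_margX : ∑ x, margX μ x = 1 := hμ1
  -- marginals of μstar agree with those of μ
  have hstar0 : ∀ x y, 0 ≤ μstar x y := fun x y =>
    mul_nonneg (margX_nonneg μ hμ0 x)
      (div_nonneg (margYU_nonneg μ η hμ0 y _) (margU_nonneg μ η hμ0 _))
  have hmargX_star : ∀ x, margX μstar x = margX μ x := by
    intro x
    show ∑ y, margX μ x * (margYU μ η y (η x) / margU μ η (η x)) = margX μ x
    rw [← Finset.mul_sum, ← Finset.sum_div, sum_margYU μ η]
    rcases eq_or_lt_of_le (margU_nonneg μ η hμ0 (η x)) with h | h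
    · rw [margX_eq_zero μ η hμ0 x h.symm]; ring
    · rw [div_self h.ne']; ring
  have hmargU_star : ∀ u, margU μstar η u = margU μ η u := by
    intro u
    exact Finset.sum_congr rfl fun x _ => by rw [hmargX_star]
  have hmargYU_star : ∀ y u, margYU μstar η y u = margYU μ η y u := by
    intro y u
    have h1 : ∀ x, (if η x = u then μstar x y else 0)
        = (if η x = u then margX μ x else 0) * (margYU μ η y u / margU μ η u) := by
      intro x
      by_cases h : η x = u
      · simp only [h, if_pos]
        rw [hμstar_def, h]
      · simp [h]
    show ∑ x, (if η x = u then μstar x y else 0) = _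
    rw [Finset.sum_congr rfl fun x _ => h1 x, ← Finset.sum_mul]
    show margU μ η u * (margYU μ η y u / margU μ η u) = margYU μ η y u
    rcases eq_or_lt_of_le (margU_nonneg μ η hμ0 u) with h | h
    · have h2 : margYU μ η y u = 0 :=
        le_antisymm (h ▸ margYU_le_margU μ η hμ0 y u) (margYU_nonneg μ η hμ0 y u)
      rw [h2, ← h]; simp
    · rw [mul_comm, div_mul_cancel₀ _ h.ne']
  -- Part 1 : IsDist μstar
  have part1 : IsDist μstar := by
    refine ⟨hstar0, ?_⟩
    calc ∑ x, ∑ y, μstar x y = ∑ x, margX μ x :=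
          Finset.sum_congr rfl fun x _ => hmargX_star x
      _ = 1 := hsum_margX
  -- Part 2 : CondIndep μstar
  have part2 : CondIndep μstar η := by
    intro u hu x y
    rw [hmargU_star] at hu
    by_cases h : η x = u
    · simp only [h, if_pos]
      rw [hmargU_star, hmargX_star, hmargYU_star, hμstar_def, h]
      field_simp
    · simp [h]
  -- Part 3 : KL μ μstar = condMI μ η
  have part3 : KL μ μstar = condMI μ η := by
    unfold KL condMI
    refine Finset.sum_congr rfl fun x _ => Finset.sum_congr rfl fun y _ => ?_
    rcases eq_or_lt_of_le (hμ0 x y) with h | h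
    · rw [← h, zero_mul, zero_mul]
    · have hX := margX_pos μ hμ0 x y h
      have hU := margU_pos μ η hμ0 x y h
      have hYU := margYU_pos μ η hμ0 x y h
      congr 1
      rw [hμstar_def]
      field_simp
  refine ⟨part1, part2, part3, ?_⟩
  -- Part 4 : minimality
  intro ν hν hνCI hac
  obtain ⟨hν0, hν1⟩ := hν
  set B : U → Y → ℝ := fun u y =>
    Real.log (margYU μ η y u * margU ν η u / (margU μ η u * margYU ν η y u)) with hB
  have key : ∀ x y, μ x y * Real.log (μ x y / ν x y)
      = μ x y * Real.log (μ x y * margU μ η (η x) / (margX μ x * margYU μ η y (η x)))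
        + μ x y * Real.log (margX μ x / margX ν x)
        + μ x y * B (η x) y := by
    intro x y
    rcases eq_or_lt_of_le (hμ0 x y) with h | h
    · rw [← h]; ring
    · have hνxy : 0 < ν x y := by
        rcases eq_or_lt_of_le (hν0 x y) with h2 | h2
        · exact absurd (hac x y h2.symm) h.ne'
        · exact h2
      have hXμ := margX_pos μ hμ0 x y h
      have hUμ := margU_pos μ η hμ0 x y h
      have hYUμ := margYU_pos μ η hμ0 x y h
      have hXν := margX_pos ν hν0 x y hνxy
      have hUν := margU_pos ν η hν0 x y hνxy
      have hYUν := margYU_pos ν η hν0 x y hνxy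
      have hrel : ν x y * margU ν η (η x) = margX ν x * margYU ν η y (η x) := by
        have := hνCI (η x) hUν x y
        simpa using this
      have hlogrel : Real.log (ν x y) + Real.log (margU ν η (η x))
          = Real.log (margX ν x) + Real.log (margYU ν η y (η x)) := by
        rw [← Real.log_mul hνxy.ne' hUν.ne', ← Real.log_mul hXν.ne' hYUν.ne', hrel]
      simp only [hB]
      rw [Real.log_div h.ne' hνxy.ne',
        Real.log_div (mul_pos h hUμ).ne' (mul_pos hXμ hYUμ).ne',
        Real.log_mul h.ne' hUμ.ne', Real.log_mul hXμ.ne' hYUμ.ne',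
        Real.log_div hXμ.ne' hXν.ne',
        Real.log_div (mul_pos hYUμ hUν).ne' (mul_pos hUμ hYUν).ne',
        Real.log_mul hYUμ.ne' hUν.ne', Real.log_mul hUμ.ne' hYUν.ne']
      linear_combination (-(μ x y)) * hlogrel
  have split : KL μ ν = condMI μ η
      + (∑ x, margX μ x * Real.log (margX μ x / margX ν x))
      + (∑ x, ∑ y, μ x y * B (η x) y) := by
    unfold KL condMI
    rw [Finset.sum_congr rfl fun x _ => Finset.sum_congr rfl fun y _ => key x y]
    have e1 : ∀ x, ∑ y, (μ x y * Real.log (μ x y * margU μ η (η x) / (margX μ x * margYU μ η y (η x)))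
        + μ x y * Real.log (margX μ x / margX ν x)
        + μ x y * B (η x) y)
        = (∑ y, μ x y * Real.log (μ x y * margU μ η (η x) / (margX μ x * margYU μ η y (η x))))
        + margX μ x * Real.log (margX μ x / margX ν x)
        + ∑ y, μ x y * B (η x) y := by
      intro x
      rw [Finset.sum_add_distrib, Finset.sum_add_distrib, ← Finset.sum_mul]
      rfl
    rw [Finset.sum_congr rfl fun x _ => e1 x, Finset.sum_add_distrib,
      Finset.sum_add_distrib]
  have S1 : 0 ≤ ∑ x, margX μ x * Real.log (margX μ x / margX ν x) := by
    apply gibbs _ _ (margX_nonneg μ hμ0) (margX_nonneg ν hν0)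
    · intro x hx
      have hxpos : 0 < margX μ x := lt_of_le_of_ne (margX_nonneg μ hμ0 x) (Ne.symm hx)
      obtain ⟨y, hy⟩ := exists_pos_of_sum_pos _ (fun y => hμ0 x y) hxpos
      have : 0 < ν x y := by
        rcases eq_or_lt_of_le (hν0 x y) with h2 | h2
        · exact absurd (hac x y h2.symm) hy.ne'
        · exact h2
      exact lt_of_lt_of_le this (le_margX ν hν0 x y)
    · show ∑ x, margX ν x ≤ ∑ x, margX μ x
      unfold margX
      rw [hν1, hμ1]
  have S2regroup : ∑ x, ∑ y, μ x y * B (η x) y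
      = ∑ u, ∑ y, margYU μ η y u * B u y := by
    rw [Finset.sum_comm]
    conv_rhs => rw [Finset.sum_comm]
    refine Finset.sum_congr rfl fun y _ => ?_
    have e2 : ∀ x, μ x y * B (η x) y
        = ∑ u, if η x = u then μ x y * B u y else 0 := by
      intro x
      rw [Finset.sum_ite_eq]
      simp
    rw [Finset.sum_congr rfl fun x _ => e2 x, Finset.sum_comm]
    refine Finset.sum_congr rfl fun u _ => ?_
    unfold margYU
    rw [Finset.sum_mul]
    refine Finset.sum_congr rfl fun x _ => ?_
    by_cases h : η x = u <;> simp [h]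
  have S2 : 0 ≤ ∑ x, ∑ y, μ x y * B (η x) y := by
    rw [S2regroup]
    apply Finset.sum_nonneg
    intro u _
    rcases eq_or_lt_of_le (margU_nonneg μ η hμ0 u) with h | h
    · apply Finset.sum_nonneg
      intro y _
      have h2 : margYU μ η y u = 0 :=
        le_antisymm (h ▸ margYU_le_margU μ η hμ0 y u) (margYU_nonneg μ η hμ0 y u)
      rw [h2, zero_mul]
    · obtain ⟨x0, y0, hx0, hxy0⟩ := margU_pos_elim μ η hμ0 u h
      have hν0xy : 0 < ν x0 y0 := by
        rcases eq_or_lt_of_le (hν0 x0 y0) with h2 | h2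
        · exact absurd (hac x0 y0 h2.symm) hxy0.ne'
        · exact h2
      have hUν : 0 < margU ν η u := hx0 ▸ margU_pos ν η hν0 x0 y0 hν0xy
      have main := gibbs (fun y => margYU μ η y u)
        (fun y => margYU ν η y u * margU μ η u / margU ν η u)
        (fun y => margYU_nonneg μ η hμ0 y u)
        (fun y => div_nonneg (mul_nonneg (margYU_nonneg ν η hν0 y u) h.le) hUν.le)
        (fun y hy => by
          have hypos : 0 < margYU μ η y u :=
            lt_of_le_of_ne (margYU_nonneg μ η hμ0 y u) (Ne.symm hy)
          obtain ⟨x1, hx1, hx1pos⟩ := margYU_pos_elim μ η hμ0 y u hypos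
          have hνx1 : 0 < ν x1 y := by
            rcases eq_or_lt_of_le (hν0 x1 y) with h2 | h2
            · exact absurd (hac x1 y h2.symm) hx1pos.ne'
            · exact h2
          have hYUν : 0 < margYU ν η y u := hx1 ▸ margYU_pos ν η hν0 x1 y hνx1
          positivity)
        (by
          rw [← Finset.sum_div, ← Finset.sum_mul, sum_margYU ν η, mul_comm,
            mul_div_assoc, div_self hUν.ne', mul_one, ← sum_margYU μ η])
      refine le_trans main (le_of_eq (Finset.sum_congr rfl fun y _ => ?_))
      show margYU μ η y u * Real.log (margYU μ η y u
        / (margYU ν η y u * margU μ η u / margU ν η u)) = margYU μ η y u * B u y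
      rcases eq_or_lt_of_le (margYU_nonneg μ η hμ0 y u) with h2 | h2
      · rw [← h2, zero_mul, zero_mul]
      · obtain ⟨x1, hx1, hx1pos⟩ := margYU_pos_elim μ η hμ0 y u h2
        have hνx1 : 0 < ν x1 y := by
          rcases eq_or_lt_of_le (hν0 x1 y) with h3 | h3
          · exact absurd (hac x1 y h3.symm) hx1pos.ne'
          · exact h3
        have hYUν : 0 < margYU ν η y u := hx1 ▸ margYU_pos ν η hν0 x1 y hνx1
        simp only [hB]
        congr 1
        field_simp
  linarith [split, S1, S2]
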